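/- For β ∈ (0,1), λ > 0, let T_N = ∑_{i=1}^{N−1} Z_i^o with Z_i^o independent exponentials of rates λi, and t* = (1/λ)(log(N−1) − log(log(1/β))). Then P(T_N > t*) = 1 − (1 + log β/(N−1))^{N−1} → 1 − β as N → ∞; consequently the β-quantile of T_N is Θ((1/λ)(log N − log log(1/β))). -/

import Mathlib

open MeasureTheory ProbabilityTheory Filter
open Real
open scoped ENNReal NNReal


lemma aux_ftc (lam : ℝ) (n : ℕ) (t : ℝ) :
    ∫ y in (0:ℝ)..t,
      lam * ((n:ℝ)+1) * Real.exp (-(lam * ((n:ℝ)+1) * y)) *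
        (1 - (1 - Real.exp (-(lam * (t - y)))) ^ n)
    = (1 - (1 - Real.exp (-(lam * t))) ^ (n+1)) - Real.exp (-(lam * ((n:ℝ)+1) * t)) := by
  have key : ∀ y : ℝ, HasDerivAt
      (fun y => -Real.exp (-(lam * ((n:ℝ)+1) * y)) +
        Real.exp (-(lam * ((n:ℝ)+1) * y)) * (1 - Real.exp (-(lam * (t - y)))) ^ (n+1))
      (lam * ((n:ℝ)+1) * Real.exp (-(lam * ((n:ℝ)+1) * y)) *
        (1 - (1 - Real.exp (-(lam * (t - y)))) ^ n)) y := by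
    intro y
    have hE : HasDerivAt (fun y : ℝ => Real.exp (-(lam * ((n:ℝ)+1) * y)))
        (Real.exp (-(lam * ((n:ℝ)+1) * y)) * (-(lam * ((n:ℝ)+1)))) y := by
      have h1 : HasDerivAt (fun y : ℝ => -(lam * ((n:ℝ)+1) * y)) (-(lam * ((n:ℝ)+1))) y := by
        have h0 := ((hasDerivAt_id y).const_mul (lam * ((n:ℝ)+1))).neg
        simp only [mul_one] at h0
        exact h0
      exact h1.exp
    have hF : HasDerivAt (fun y : ℝ => Real.exp (-(lam * (t - y))))
        (Real.exp (-(lam * (t - y))) * lam) y := by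
      have h1 : HasDerivAt (fun y : ℝ => -(lam * (t - y))) lam y := by
        have h0 := (((hasDerivAt_id y).const_sub t).const_mul lam).neg
        simp only [mul_neg, mul_one, neg_neg] at h0
        exact h0
      exact h1.exp
    have hG : HasDerivAt (fun y : ℝ => (1 - Real.exp (-(lam * (t - y)))) ^ (n+1))
        ((((n:ℝ)+1)) * (1 - Real.exp (-(lam * (t - y)))) ^ n *
          (-(Real.exp (-(lam * (t - y))) * lam))) y := by
      have h2 := (hF.const_sub 1).pow (n+1)
      norm_num at h2
      convert h2 using 1
      push_cast
      all_goals first | rfl | ring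
    have h3 := (hE.neg).add (hE.mul hG)
    convert h3 using 1
    all_goals first | rfl | ring
  have hcont : Continuous fun y => lam * ((n:ℝ)+1) * Real.exp (-(lam * ((n:ℝ)+1) * y)) *
      (1 - (1 - Real.exp (-(lam * (t - y)))) ^ n) := by
    fun_prop
  rw [intervalIntegral.integral_eq_sub_of_hasDerivAt (fun y _ => key y)
    (hcont.intervalIntegrable 0 t)]
  simp only [sub_self, mul_zero, neg_zero, Real.exp_zero, sub_zero, one_pow]
  ring_nf


noncomputable def Fccdf (lam : ℝ) (n : ℕ) (t : ℝ) : ℝ :=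
  if t < 0 then 1 else 1 - (1 - Real.exp (-(lam * t))) ^ n

lemma Fccdf_meas (lam : ℝ) (n : ℕ) : Measurable (Fccdf lam n) := by
  unfold Fccdf
  exact Measurable.ite measurableSet_Iio measurable_const (by fun_prop)

lemma Fccdf_nonneg (lam : ℝ) (hlam : 0 < lam) (n : ℕ) (t : ℝ) : 0 ≤ Fccdf lam n t := by
  unfold Fccdf
  split_ifs with ht
  · norm_num
  · push_neg at ht
    have h1 : Real.exp (-(lam * t)) ≤ 1 := by
      apply Real.exp_le_one_iff.mpr; nlinarith
    have h2 : (0:ℝ) < Real.exp (-(lam * t)) := Real.exp_pos _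
    have : (1 - Real.exp (-(lam * t))) ^ n ≤ 1 := by
      apply pow_le_one₀ (by linarith) (by linarith)
    linarith

lemma aux_ccdf {Ω : Type*} [MeasureSpace Ω] [IsProbabilityMeasure (ℙ : Measure Ω)]
    (lam : ℝ) (hlam : 0 < lam)
    (Z : ℕ → Ω → ℝ) (hmeas : ∀ i, Measurable (Z i))
    (hindep : iIndepFun (m := fun _ => (inferInstance : MeasurableSpace ℝ)) Z ℙ)
    (hexp : ∀ i : ℕ, ∀ x : ℝ, 0 ≤ x →
      ℙ {ω | x < Z i ω} = ENNReal.ofReal (Real.exp (-(lam * ((i : ℝ) + 1)) * x)))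
    (n : ℕ) (t : ℝ) :
      ℙ {ω | t < ∑ i ∈ Finset.range n, Z i ω}
        = ENNReal.ofReal (Fccdf lam n t) := by
  induction n generalizing t with
  | zero =>
    by_cases ht : t < 0
    · simp [Fccdf, ht]
    · simp [Fccdf, ht, not_lt.mp ht]
  | succ n IH =>
    set r : ℝ := lam * ((n:ℝ)+1) with hrdef
    have hrpos : 0 < r := by positivity
    set S : Ω → ℝ := fun ω => ∑ i ∈ Finset.range n, Z i ω with hSdef
    have hS : Measurable S := Finset.measurable_sum _ (fun i _ => hmeas i)
    -- independence of Z n and S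
    have hindepZS : IndepFun (Z n) S ℙ := by
      have h := hindep.indepFun_finsetSum_of_notMem hmeas (Finset.notMem_range_self (n := n))
      have hs : (∑ j ∈ Finset.range n, Z j) = S := by
        funext ω; simp [hSdef, Finset.sum_apply]
      rw [hs] at h
      exact h.symm
    set ν : Measure ℝ := Measure.map (Z n) ℙ with hνdef
    set μS : Measure ℝ := Measure.map S ℙ with hμdef
    haveI : IsProbabilityMeasure ν := Measure.isProbabilityMeasure_map (hmeas n).aemeasurable
    haveI : IsProbabilityMeasure μS := Measure.isProbabilityMeasure_map hS.aemeasurable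
    have hν_Ioi : ∀ x : ℝ, 0 ≤ x → ν (Set.Ioi x) = ENNReal.ofReal (Real.exp (-(r * x))) := by
      intro x hx
      rw [hνdef, Measure.map_apply (hmeas n) measurableSet_Ioi]
      have h := hexp n x hx
      have hset : Z n ⁻¹' Set.Ioi x = {ω | x < Z n ω} := rfl
      rw [hset, h]
      congr 1
      rw [hrdef]
      ring_nf
    have hν_Iic0 : ν (Set.Iic 0) = 0 := by
      have h1 : ν (Set.Ioi 0) = 1 := by
        rw [hν_Ioi 0 le_rfl]; simp
      have h2 : Set.Iic (0:ℝ) = (Set.Ioi 0)ᶜ := Set.compl_Ioi.symm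
      rw [h2, measure_compl measurableSet_Ioi (measure_ne_top _ _), measure_univ, h1, tsub_self]
    -- identify ν with the exponential measure
    have hν_eq : ν = expMeasure r := by
      haveI := isProbabilityMeasure_expMeasure hrpos
      refine Measure.ext_of_Iic ν (expMeasure r) (fun x => ?_)
      rw [← ofReal_cdf (expMeasure r) x]
      have hcdf : cdf (expMeasure r) x = if 0 ≤ x then 1 - Real.exp (-(r * x)) else 0 :=
        cdf_expMeasure_eq hrpos x
      rw [hcdf]
      by_cases hx : 0 ≤ x
      · rw [if_pos hx]
        have h2 : Set.Iic x = (Set.Ioi x)ᶜ := Set.compl_Ioi.symm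
        rw [h2, measure_compl measurableSet_Ioi (measure_ne_top _ _), measure_univ,
          hν_Ioi x hx, ENNReal.ofReal_sub _ (Real.exp_pos _).le, ENNReal.ofReal_one]
      · rw [if_neg hx]
        push_neg at hx
        rw [ENNReal.ofReal_zero]
        exact measure_mono_null (Set.Iic_subset_Iic.mpr hx.le) hν_Iic0
    -- rewrite as a product-measure computation
    have hmeasSet : MeasurableSet {p : ℝ × ℝ | t < p.2 + p.1} :=
      measurableSet_lt measurable_const (measurable_snd.add measurable_fst)
    have hmap : Measure.map (fun ω => (Z n ω, S ω)) ℙ = ν.prod μS :=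
      (indepFun_iff_map_prod_eq_prod_map_map (hmeas n).aemeasurable hS.aemeasurable).mp hindepZS
    have step1 : ℙ {ω | t < ∑ i ∈ Finset.range (n+1), Z i ω}
        = ∫⁻ y, ENNReal.ofReal (Fccdf lam n (t - y)) ∂ν := by
      have h1 : {ω | t < ∑ i ∈ Finset.range (n+1), Z i ω}
          = (fun ω => (Z n ω, S ω)) ⁻¹' {p : ℝ × ℝ | t < p.2 + p.1} := by
        ext ω
        simp [Finset.sum_range_succ, hSdef]
      rw [h1, ← Measure.map_apply ((hmeas n).prodMk hS) hmeasSet, hmap,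
        Measure.prod_apply hmeasSet]
      apply lintegral_congr
      intro y
      have h2 : Prod.mk y ⁻¹' {p : ℝ × ℝ | t < p.2 + p.1} = Set.Ioi (t - y) := by
        ext x; simp [sub_lt_iff_lt_add]
      rw [h2, hμdef, Measure.map_apply hS measurableSet_Ioi]
      have h3 : S ⁻¹' Set.Ioi (t - y) = {ω | t - y < S ω} := rfl
      rw [h3, IH (t - y)]
    rw [step1]
    by_cases ht : t < 0
    · -- everything is 1
      have hae : ∀ᵐ y ∂ν, 0 < y := by
        rw [ae_iff]
        convert hν_Iic0 using 2
        ext y; simp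
      have hone : ∀ᵐ y ∂ν, ENNReal.ofReal (Fccdf lam n (t - y)) = 1 := by
        filter_upwards [hae] with y hy
        rw [Fccdf, if_pos (by linarith), ENNReal.ofReal_one]
      rw [lintegral_congr_ae hone, lintegral_one, measure_univ, Fccdf, if_pos ht,
        ENNReal.ofReal_one]
    · push_neg at ht
      have hnn_aux : ∀ s : ℝ, 0 ≤ s → 0 ≤ 1 - (1 - Real.exp (-(lam * s))) ^ n := by
        intro s hs
        have h1 : Real.exp (-(lam * s)) ≤ 1 := by
          apply Real.exp_le_one_iff.mpr; nlinarith
        have h2 : (0:ℝ) < Real.exp (-(lam * s)) := Real.exp_pos _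
        have : (1 - Real.exp (-(lam * s))) ^ n ≤ 1 :=
          pow_le_one₀ (by linarith) (by linarith)
        linarith
      have hsplit1 : ∫⁻ y, ENNReal.ofReal (Fccdf lam n (t - y)) ∂ν
          = ∫⁻ y in Set.Iic 0, ENNReal.ofReal (Fccdf lam n (t - y)) ∂ν
            + ∫⁻ y in (Set.Iic 0)ᶜ, ENNReal.ofReal (Fccdf lam n (t - y)) ∂ν :=
        (lintegral_add_compl _ measurableSet_Iic).symm
      have hzero : ∫⁻ y in Set.Iic 0, ENNReal.ofReal (Fccdf lam n (t - y)) ∂ν = 0 :=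
        setLIntegral_measure_zero _ _ hν_Iic0
      have hcompl : (Set.Iic (0:ℝ))ᶜ = Set.Ioi 0 := Set.compl_Iic
      have hunion : Set.Ioi (0:ℝ) = Set.Ioc 0 t ∪ Set.Ioi t := (Set.Ioc_union_Ioi_eq_Ioi ht).symm
      have hdisj : Disjoint (Set.Ioc (0:ℝ) t) (Set.Ioi t) := Set.Ioc_disjoint_Ioi le_rfl
      have hA : ∫⁻ y in Set.Ioi t, ENNReal.ofReal (Fccdf lam n (t - y)) ∂ν
          = ENNReal.ofReal (Real.exp (-(r * t))) := by
        have hone : ∀ y ∈ Set.Ioi t, ENNReal.ofReal (Fccdf lam n (t - y)) = 1 := by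
          intro y hy
          simp only [Set.mem_Ioi] at hy
          rw [Fccdf, if_pos (by linarith), ENNReal.ofReal_one]
        rw [setLIntegral_congr_fun measurableSet_Ioi hone, setLIntegral_one,
          hν_Ioi t ht]
      have hB : ∫⁻ y in Set.Ioc 0 t, ENNReal.ofReal (Fccdf lam n (t - y)) ∂ν
          = ENNReal.ofReal ((1 - (1 - Real.exp (-(lam * t))) ^ (n+1)) - Real.exp (-(r * t))) := by
        rw [hν_eq]
        have hexp_eq : expMeasure r = volume.withDensity (exponentialPDF r) := rfl
        have hmeasF : Measurable fun y => ENNReal.ofReal (Fccdf lam n (t - y)) := by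
          apply ENNReal.measurable_ofReal.comp
          exact (Fccdf_meas lam n).comp (measurable_const.sub measurable_id)
        have hpdf_meas : Measurable (exponentialPDF r) :=
          (measurable_exponentialPDFReal r).ennreal_ofReal
        rw [hexp_eq, restrict_withDensity measurableSet_Ioc,
          lintegral_withDensity_eq_lintegral_mul _ hpdf_meas hmeasF]
        have h1 : ∫⁻ y in Set.Ioc 0 t,
              (exponentialPDF r * fun y => ENNReal.ofReal (Fccdf lam n (t - y))) y ∂volume
            = ∫⁻ y in Set.Ioc 0 t,
              ENNReal.ofReal (r * Real.exp (-(r * y)) *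
                (1 - (1 - Real.exp (-(lam * (t - y)))) ^ n)) ∂volume := by
          apply setLIntegral_congr_fun measurableSet_Ioc ?_
          intro y hy
          obtain ⟨hy0, hyt⟩ := hy
          simp only [Pi.mul_apply]
          rw [exponentialPDF_eq, if_pos hy0.le, Fccdf, if_neg (by push_neg; linarith),
            ← ENNReal.ofReal_mul (by positivity)]
        rw [h1]
        have hcont2 : Continuous fun y => r * Real.exp (-(r * y)) *
            (1 - (1 - Real.exp (-(lam * (t - y)))) ^ n) := by fun_prop
        have hint : IntegrableOn (fun y => r * Real.exp (-(r * y)) *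
            (1 - (1 - Real.exp (-(lam * (t - y)))) ^ n)) (Set.Ioc 0 t) volume :=
          hcont2.integrableOn_Ioc
        have hnnae : 0 ≤ᵐ[volume.restrict (Set.Ioc 0 t)] fun y => r * Real.exp (-(r * y)) *
            (1 - (1 - Real.exp (-(lam * (t - y)))) ^ n) := by
          rw [Filter.EventuallyLE, ae_restrict_iff' measurableSet_Ioc]
          apply ae_of_all
          intro y hy
          obtain ⟨hy0, hyt⟩ := hy
          have := hnn_aux (t - y) (by linarith)
          have := Real.exp_pos (-(r * y))
          positivity
        rw [← MeasureTheory.ofReal_integral_eq_lintegral_ofReal hint hnnae]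
        congr 1
        rw [← intervalIntegral.integral_of_le ht]
        rw [hrdef]
        exact aux_ftc lam n t
      rw [hsplit1, hzero, zero_add, hcompl, hunion,
        lintegral_union measurableSet_Ioi hdisj, hA, hB]
      have hexp1 : Real.exp (-(r * t)) = Real.exp (-(lam * t)) ^ (n+1) := by
        rw [← Real.exp_nat_mul]
        congr 1
        rw [hrdef]
        push_cast
        ring
      have ha1 : Real.exp (-(lam * t)) ≤ 1 := by
        apply Real.exp_le_one_iff.mpr; nlinarith
      have ha0 : (0:ℝ) < Real.exp (-(lam * t)) := Real.exp_pos _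
      have hnn2 : 0 ≤ (1 - (1 - Real.exp (-(lam * t))) ^ (n+1)) - Real.exp (-(r * t)) := by
        rw [hexp1]
        have hp1 : Real.exp (-(lam * t)) ^ (n+1) ≤ Real.exp (-(lam * t)) :=
          pow_le_of_le_one ha0.le ha1 (Nat.succ_ne_zero n)
        have hp2 : (1 - Real.exp (-(lam * t))) ^ (n+1) ≤ 1 - Real.exp (-(lam * t)) :=
          pow_le_of_le_one (by linarith) (by linarith) (Nat.succ_ne_zero n)
        linarith
      rw [← ENNReal.ofReal_add hnn2 (Real.exp_pos _).le, Fccdf, if_neg (not_lt.mpr ht)]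
      congr 1
      ring


/-- Non-cooperative guaranteed time: for `T_N = ∑_{i=1}^{N−1} Z_i^o` with `Z_i^o` independent
exponential of rate `λi` and `t*_N = (1/λ)(log(N−1) − log(log(1/β)))`,
`P(T_N > t*_N) = 1 − (1 + log β/(N−1))^{N−1} → 1 − β`; consequently the `β`-quantile of
`T_N` is `Θ((1/λ)(log N − log log(1/β)))`. -/
theorem stmt_18 {Ω : Type*} [MeasureSpace Ω] [IsProbabilityMeasure (ℙ : Measure Ω)]
    (β lam : ℝ) (hβ : β ∈ Set.Ioo (0 : ℝ) 1) (hlam : 0 < lam)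
    (Z : ℕ → Ω → ℝ) (hmeas : ∀ i, Measurable (Z i))
    (hindep : iIndepFun (m := fun _ => (inferInstance : MeasurableSpace ℝ)) Z ℙ)
    (hexp : ∀ i : ℕ, ∀ x : ℝ, 0 ≤ x →
      ℙ {ω | x < Z i ω} = ENNReal.ofReal (Real.exp (-(lam * ((i : ℝ) + 1)) * x)))
    (T : ℕ → Ω → ℝ) (hT : ∀ N ω, T N ω = ∑ i ∈ Finset.range (N - 1), Z i ω)
    (tstar : ℕ → ℝ)
    (htstar : ∀ N : ℕ, tstar N
      = (1 / lam) * (Real.log ((N : ℝ) - 1) - Real.log (Real.log (1 / β)))) :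
    (∀ N : ℕ, 2 ≤ N → 0 < 1 + Real.log β / ((N : ℝ) - 1) →
      ℙ {ω | tstar N < T N ω}
        = ENNReal.ofReal (1 - (1 + Real.log β / ((N : ℝ) - 1)) ^ (N - 1))) ∧
    Tendsto (fun N : ℕ => (ℙ {ω | tstar N < T N ω}).toReal) atTop (nhds (1 - β)) ∧
    (∃ c C : ℝ, ∃ N₀ : ℕ, 0 < c ∧ c ≤ C ∧ ∀ N : ℕ, N₀ ≤ N → ∀ t : ℝ,
      (ℙ {ω | T N ω ≤ t}).toReal = β →
      c * ((1 / lam) * (Real.log N - Real.log (Real.log (1 / β)))) ≤ t ∧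
      t ≤ C * ((1 / lam) * (Real.log N - Real.log (Real.log (1 / β))))) := by
  obtain ⟨hβ0, hβ1⟩ := hβ
  have hlogβ : Real.log β < 0 := Real.log_neg hβ0 hβ1
  set s : ℝ := Real.log (1/β) with hsdef
  have hslog : s = -Real.log β := by rw [hsdef, one_div, Real.log_inv]
  have hs : 0 < s := by rw [hslog]; linarith
  -- Part 1
  have part1 : ∀ N : ℕ, 2 ≤ N → 0 < 1 + Real.log β / ((N : ℝ) - 1) →
      ℙ {ω | tstar N < T N ω}
        = ENNReal.ofReal (1 - (1 + Real.log β / ((N : ℝ) - 1)) ^ (N - 1)) := by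
    intro N hN hpos
    have hcast : ((N - 1 : ℕ) : ℝ) = (N : ℝ) - 1 := by
      rw [Nat.cast_sub (by omega), Nat.cast_one]
    have hm0 : (0:ℝ) < (N:ℝ) - 1 := by
      have : (2:ℝ) ≤ (N:ℝ) := by exact_mod_cast hN
      linarith
    have hsm : s < (N:ℝ) - 1 := by
      have h2 : -Real.log β / ((N:ℝ)-1) < 1 := by
        rw [neg_div]; linarith [hpos]
      have h3 := (div_lt_one hm0).mp h2
      rw [hslog]
      linarith
    have htpos : 0 ≤ tstar N := by
      rw [htstar N]
      have hlog : Real.log s ≤ Real.log ((N:ℝ)-1) := Real.log_le_log hs hsm.le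
      have h1 : (0:ℝ) ≤ 1/lam := by positivity
      have h2 : (0:ℝ) ≤ Real.log ((N:ℝ)-1) - Real.log s := by linarith
      exact mul_nonneg h1 h2
    have hexp_tstar : Real.exp (-(lam * tstar N)) = s / ((N:ℝ)-1) := by
      rw [htstar N]
      have hlam' : lam ≠ 0 := ne_of_gt hlam
      rw [show lam * (1/lam * (Real.log ((N:ℝ)-1) - Real.log s))
          = Real.log ((N:ℝ)-1) - Real.log s by field_simp]
      rw [neg_sub, Real.exp_sub, Real.exp_log hs, Real.exp_log hm0]
    have h1 : ℙ {ω | tstar N < T N ω} = ENNReal.ofReal (Fccdf lam (N-1) (tstar N)) := by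
      have hset : {ω | tstar N < T N ω}
          = {ω | tstar N < ∑ i ∈ Finset.range (N-1), Z i ω} := by
        ext ω; rw [Set.mem_setOf_eq, hT]; rfl
      rw [hset]
      exact aux_ccdf lam hlam Z hmeas hindep hexp (N-1) (tstar N)
    rw [h1, Fccdf, if_neg (not_lt.mpr htpos), hexp_tstar]
    congr 1
    rw [hslog]
    congr 1
    ring
  refine ⟨part1, ?_, ?_⟩
  -- Part 2
  · have hev : ∀ᶠ N : ℕ in atTop, (ℙ {ω | tstar N < T N ω}).toReal
        = 1 - (1 + Real.log β / ((N : ℝ) - 1)) ^ (N - 1) := by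
      have h2 : ∀ᶠ N : ℕ in atTop, s + 1 < (N:ℝ) :=
        tendsto_natCast_atTop_atTop.eventually_gt_atTop (s+1)
      filter_upwards [h2, eventually_ge_atTop 2] with N hsN hN2
      have hm0 : (0:ℝ) < (N:ℝ)-1 := by
        have : (2:ℝ) ≤ (N:ℝ) := by exact_mod_cast hN2
        linarith
      have hpos : 0 < 1 + Real.log β / ((N : ℝ) - 1) := by
        have hd : s / ((N:ℝ)-1) < 1 := (div_lt_one hm0).mpr (by linarith)
        have : Real.log β / ((N:ℝ)-1) = -(s/((N:ℝ)-1)) := by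
          rw [hslog]; ring
        rw [this]
        linarith
      rw [part1 N hN2 hpos, ENNReal.toReal_ofReal]
      have hq1 : 1 + Real.log β / ((N : ℝ) - 1) ≤ 1 := by
        have : Real.log β / ((N:ℝ)-1) ≤ 0 := div_nonpos_of_nonpos_of_nonneg hlogβ.le hm0.le
        linarith
      have := pow_le_one₀ hpos.le hq1 (n := N - 1)
      linarith
    have hbase : Tendsto (fun n : ℕ => (1 + Real.log β / (n:ℝ)) ^ n) atTop (nhds β) := by
      have h := Real.tendsto_one_add_div_pow_exp (Real.log β)
      rwa [Real.exp_log hβ0] at h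
    have hcomp : Tendsto (fun N : ℕ => (1 + Real.log β / ((N-1 : ℕ):ℝ)) ^ (N-1))
        atTop (nhds β) := hbase.comp (tendsto_sub_atTop_nat 1)
    have hev2 : ∀ᶠ N : ℕ in atTop, (1 + Real.log β / ((N-1:ℕ):ℝ)) ^ (N-1)
        = (1 + Real.log β / ((N:ℝ)-1)) ^ (N-1) := by
      filter_upwards [eventually_ge_atTop 1] with N hN1
      rw [Nat.cast_sub hN1, Nat.cast_one]
    have hfin := (hcomp.congr' hev2).const_sub 1
    exact hfin.congr' (hev.mono fun N h => h.symm)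
  -- Part 3
  · have claim_t : ∀ N : ℕ, 2 ≤ N → ∀ t : ℝ, (ℙ {ω | T N ω ≤ t}).toReal = β →
        t = 1/lam * (-Real.log (1 - Real.exp (-(s / ((N:ℝ)-1))))) := by
      intro N hN t hteq
      have hcast : ((N - 1 : ℕ) : ℝ) = (N : ℝ) - 1 := by
        rw [Nat.cast_sub (by omega), Nat.cast_one]
      have hm0 : (0:ℝ) < (N:ℝ) - 1 := by
        have : (2:ℝ) ≤ (N:ℝ) := by exact_mod_cast hN
        linarith
      have hSmeas : Measurable (fun ω => ∑ i ∈ Finset.range (N-1), Z i ω) :=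
        Finset.measurable_sum _ (fun i _ => hmeas i)
      have hset : {ω | T N ω ≤ t} = {ω | t < ∑ i ∈ Finset.range (N-1), Z i ω}ᶜ := by
        ext ω
        simp only [Set.mem_setOf_eq, Set.mem_compl_iff, not_lt, hT]
      have hP : ℙ {ω | T N ω ≤ t} = 1 - ENNReal.ofReal (Fccdf lam (N-1) t) := by
        rw [hset, measure_compl (measurableSet_lt measurable_const hSmeas) (measure_ne_top _ _),
          measure_univ, aux_ccdf lam hlam Z hmeas hindep hexp (N-1) t]
      by_cases ht : t < 0
      · exfalso
        rw [hP, Fccdf, if_pos ht, ENNReal.ofReal_one, tsub_self] at hteq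
        simp at hteq
        linarith
      push_neg at ht
      set x : ℝ := 1 - Real.exp (-(lam * t)) with hxdef
      have hx0 : 0 ≤ x := by
        have : Real.exp (-(lam * t)) ≤ 1 := by
          apply Real.exp_le_one_iff.mpr; nlinarith
        rw [hxdef]; linarith
      have hx1 : x < 1 := by
        have := Real.exp_pos (-(lam * t))
        rw [hxdef]; linarith
      have hxm1 : x ^ (N-1) ≤ 1 := pow_le_one₀ hx0 hx1.le
      have hβx : x ^ (N-1) = β := by
        have h1 : ℙ {ω | T N ω ≤ t} = ENNReal.ofReal (x ^ (N-1)) := by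
          rw [hP, Fccdf, if_neg (not_lt.mpr ht), ← hxdef,
            show (1:ℝ≥0∞) = ENNReal.ofReal 1 from ENNReal.ofReal_one.symm,
            ← ENNReal.ofReal_sub 1 (show (0:ℝ) ≤ 1 - x ^ (N-1) by linarith)]
          congr 1
          ring
        rw [h1, ENNReal.toReal_ofReal (pow_nonneg hx0 _)] at hteq
        exact hteq
      have hm1 : N - 1 ≠ 0 := by omega
      have hxval : x = Real.exp (-(s / ((N:ℝ)-1))) := by
        have h2 : x = (x ^ (N-1) : ℝ) ^ (((N-1:ℕ):ℝ))⁻¹ :=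
          (Real.pow_rpow_inv_natCast hx0 hm1).symm
        rw [hβx] at h2
        rw [h2, Real.rpow_def_of_pos hβ0]
        congr 1
        rw [show Real.log β = -s by rw [hslog]; ring, hcast]
        field_simp
      have hexp_eq : Real.exp (-(lam * t)) = 1 - Real.exp (-(s / ((N:ℝ)-1))) := by
        rw [← hxval, hxdef]; ring
      have hlog := congrArg Real.log hexp_eq
      rw [Real.log_exp] at hlog
      have hlam' : lam ≠ 0 := ne_of_gt hlam
      have ht2 : t = (-(lam * t)) * (-(1/lam)) := by field_simp
      rw [ht2, hlog]
      ring
    have hm_tendsto : Tendsto (fun N : ℕ => (N:ℝ) - 1) atTop atTop := by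
      have h := tendsto_atTop_add_const_right atTop (-1 : ℝ) tendsto_natCast_atTop_atTop
      simpa [sub_eq_add_neg] using h
    have hslope : Tendsto (fun x : ℝ => (Real.exp x - 1) / x) (nhdsWithin 0 {(0:ℝ)}ᶜ)
        (nhds 1) := by
      have h := hasDerivAt_iff_tendsto_slope.mp (Real.hasDerivAt_exp 0)
      rw [Real.exp_zero] at h
      refine h.congr fun x => ?_
      simp [slope_def_field, Real.exp_zero]
    have hxN : Tendsto (fun N : ℕ => -(s / ((N:ℝ)-1))) atTop (nhds 0) := by
      have h := (tendsto_const_nhds (x := s) (f := (atTop : Filter ℕ))).div_atTop hm_tendsto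
      simpa using h.neg
    have hxN' : Tendsto (fun N : ℕ => -(s / ((N:ℝ)-1))) atTop (nhdsWithin 0 {(0:ℝ)}ᶜ) := by
      apply tendsto_nhdsWithin_of_tendsto_nhds_of_eventually_within _ hxN
      filter_upwards [eventually_ge_atTop 2] with N hN2
      have hm0 : (0:ℝ) < (N:ℝ)-1 := by
        have : (2:ℝ) ≤ (N:ℝ) := by exact_mod_cast hN2
        linarith
      have hlt : -(s / ((N:ℝ)-1)) < 0 := by
        have : 0 < s / ((N:ℝ)-1) := by positivity
        linarith
      simp only [Set.mem_compl_iff, Set.mem_singleton_iff]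
      exact ne_of_lt hlt
    have hf1 : Tendsto (fun N : ℕ =>
        (Real.exp (-(s / ((N:ℝ)-1))) - 1) / (-(s / ((N:ℝ)-1)))) atTop (nhds 1) :=
      hslope.comp hxN'
    have hf2 : Tendsto (fun N : ℕ => (N:ℝ) / ((N:ℝ)-1)) atTop (nhds 1) := by
      have h := (tendsto_const_nhds (x := (1:ℝ)) (f := (atTop : Filter ℕ))).add
        ((tendsto_const_nhds (x := (1:ℝ)) (f := (atTop : Filter ℕ))).div_atTop hm_tendsto)
      rw [add_zero] at h
      apply h.congr'
      filter_upwards [eventually_ge_atTop 2] with N hN2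
      have hm0 : (0:ℝ) < (N:ℝ)-1 := by
        have : (2:ℝ) ≤ (N:ℝ) := by exact_mod_cast hN2
        linarith
      field_simp
      ring
    have harg : Tendsto (fun N : ℕ =>
        (1 - Real.exp (-(s / ((N:ℝ)-1)))) * (N:ℝ) / s) atTop (nhds 1) := by
      have h := hf1.mul hf2
      rw [one_mul] at h
      apply h.congr'
      filter_upwards [eventually_ge_atTop 2] with N hN2
      have hm0 : (0:ℝ) < (N:ℝ)-1 := by
        have : (2:ℝ) ≤ (N:ℝ) := by exact_mod_cast hN2
        linarith
      have hm' : ((N:ℝ)-1) ≠ 0 := ne_of_gt hm0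
      have hs' : s ≠ 0 := ne_of_gt hs
      field_simp
      ring
    have hlogarg : Tendsto (fun N : ℕ =>
        -Real.log ((1 - Real.exp (-(s / ((N:ℝ)-1)))) * (N:ℝ) / s)) atTop (nhds 0) := by
      have h := ((Real.continuousAt_log one_ne_zero).tendsto).comp harg
      rw [Real.log_one] at h
      simpa using h.neg
    have claim_i : Tendsto (fun N : ℕ =>
        1/lam * (-Real.log (1 - Real.exp (-(s / ((N:ℝ)-1)))))
          - 1/lam * (Real.log N - Real.log s)) atTop (nhds 0) := by
      have h := hlogarg.const_mul (1/lam)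
      rw [mul_zero] at h
      apply h.congr'
      filter_upwards [eventually_ge_atTop 2] with N hN2
      have hm0 : (0:ℝ) < (N:ℝ)-1 := by
        have : (2:ℝ) ≤ (N:ℝ) := by exact_mod_cast hN2
        linarith
      have hE1 : Real.exp (-(s / ((N:ℝ)-1))) < 1 := by
        apply Real.exp_lt_one_iff.mpr
        have : 0 < s / ((N:ℝ)-1) := by positivity
        linarith
      have hpos1 : 0 < 1 - Real.exp (-(s / ((N:ℝ)-1))) := by linarith
      have hN0 : (0:ℝ) < (N:ℝ) := by
        have : (2:ℝ) ≤ (N:ℝ) := by exact_mod_cast hN2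
        linarith
      rw [Real.log_div (by positivity) (ne_of_gt hs),
        Real.log_mul (ne_of_gt hpos1) (ne_of_gt hN0)]
      ring
    have habs : ∀ᶠ N : ℕ in atTop,
        |1/lam * (-Real.log (1 - Real.exp (-(s / ((N:ℝ)-1)))))
          - 1/lam * (Real.log N - Real.log s)| ≤ 1 := by
      have h := Metric.tendsto_nhds.mp claim_i 1 one_pos
      filter_upwards [h] with N hd
      rw [Real.dist_eq, sub_zero] at hd
      exact hd.le
    have hAinf : Tendsto (fun N : ℕ => 1/lam * (Real.log N - Real.log s)) atTop atTop := by
      have h1 : Tendsto (fun N : ℕ => Real.log N) atTop atTop :=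
        Real.tendsto_log_atTop.comp tendsto_natCast_atTop_atTop
      have h2 := tendsto_atTop_add_const_right atTop (-(Real.log s)) h1
      have h3 : Tendsto (fun N : ℕ => Real.log N - Real.log s) atTop atTop := by
        simpa [sub_eq_add_neg] using h2
      exact h3.const_mul_atTop (by positivity)
    have hev3 : ∀ᶠ N : ℕ in atTop, 2 ≤ N ∧
        (|1/lam * (-Real.log (1 - Real.exp (-(s / ((N:ℝ)-1)))))
          - 1/lam * (Real.log N - Real.log s)| ≤ 1 ∧
        2 ≤ 1/lam * (Real.log N - Real.log s)) :=
      (eventually_ge_atTop 2).and (habs.and (hAinf.eventually_ge_atTop 2))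
    obtain ⟨N₀, hN₀⟩ := eventually_atTop.mp hev3
    refine ⟨1/2, 2, N₀, by norm_num, by norm_num, fun N hNge t hteq => ?_⟩
    obtain ⟨hN2, habs1, hA2⟩ := hN₀ N hNge
    have ht_eq := claim_t N hN2 t hteq
    rw [abs_le] at habs1
    rw [ht_eq]
    constructor
    · linarith [habs1.1]
    · linarith [habs1.2]
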